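/- Let I be a single-line instance satisfying Assumption A1 and Assumption A2. Then I has a labeling if and only if either I has a labeling containing no switchover, or there exist switchovers σ₁ < σ₂ < … < σ_l (l ≥ 1) such that: (a) there is a labeling of the stops from the first stop up to the second stop of σ₁ that contains both labels of σ₁ and has σ₁ as its only switchover; (b) σ_t and σ_{t+1} are compatible for every t = 1,…,l−1; and (c) there is a labeling of the stops from the first stop of σ_l to the last stop of I that contains both labels of σ_l and has σ_l as its only switchover. -/

import Mathlib

/-- A label is a subset of the plane ℝ². -/
abbrev Label : Type := Set (ℝ × ℝ)

/-- `f` is a labeling of the stops `a, a+1, …, b`: it chooses at each stop a candidate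
of that stop, and all chosen labels are pairwise disjoint. -/
def IsLabelingOn (K : ℕ → Set Label) (a b : ℕ) (f : ℕ → Label) : Prop :=
  (∀ m, a ≤ m → m ≤ b → f m ∈ K m) ∧
  (∀ m m', a ≤ m → m ≤ b → a ≤ m' → m' ≤ b → m ≠ m' → Disjoint (f m) (f m'))

/-- Assumption A1 (separated labels) for a single-line instance with stops `1,…,n`. -/
def SepLabels (n : ℕ) (K : ℕ → Set Label) (side : Label → Bool) : Prop :=
  ∀ i j : ℕ, 1 ≤ i → i ≤ n → 1 ≤ j → j ≤ n →
    ∀ ℓ ∈ K i, ∀ ℓ' ∈ K j, side ℓ ≠ side ℓ' → Disjoint ℓ ℓ'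

/-- Assumption A2 (transitivity property) for a single-line instance with stops `1,…,n`. -/
def TransProp (n : ℕ) (K : ℕ → Set Label) (side : Label → Bool) : Prop :=
  ∀ i j k : ℕ, 1 ≤ i → i < j → j < k → k ≤ n →
    ∀ ℓ ∈ K i, ∀ ℓ' ∈ K j, ∀ ℓ'' ∈ K k,
      side ℓ = side ℓ' → side ℓ' = side ℓ'' →
      Disjoint ℓ ℓ' → Disjoint ℓ' ℓ'' → Disjoint ℓ ℓ''

/-- Two switchovers `σ = (ℓ₁, ℓ₂)` at stops `(i, i+1)` and `σ' = (ℓ₁', ℓ₂')` at stops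
`(j, j+1)` with `i < j` are compatible: `ℓ₂` and `ℓ₁'` are assigned to the same side,
and there is a labeling of the stops `i,…,j+1` that contains `ℓ₁, ℓ₂, ℓ₁', ℓ₂'` and has
`σ` and `σ'` as its only switchovers. -/
def Compatible (K : ℕ → Set Label) (side : Label → Bool)
    (i : ℕ) (ℓ₁ ℓ₂ : Label) (j : ℕ) (ℓ₁' ℓ₂' : Label) : Prop :=
  side ℓ₂ = side ℓ₁' ∧
  ∃ g : ℕ → Label, IsLabelingOn K i (j + 1) g ∧
    g i = ℓ₁ ∧ g (i + 1) = ℓ₂ ∧ g j = ℓ₁' ∧ g (j + 1) = ℓ₂' ∧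
    ∀ m, i ≤ m → m < j + 1 →
      (side (g m) ≠ side (g (m + 1)) ↔ (m = i ∨ m = j))

/-- Under Assumptions A1 and A2: the instance has a labeling iff either it has a
labeling containing no switchover, or there exist switchovers `σ₁ < σ₂ < … < σ_l`
(`l ≥ 1`, the `t`-th switchover consisting of labels `L1 t ∈ K (pos t)` and
`L2 t ∈ K (pos t + 1)` assigned to opposite sides) such that:
(a) there is a labeling of the stops `1,…,pos 1 + 1` containing both labels of `σ₁`
whose only switchover is `σ₁`;
(b) `σ_t` and `σ_{t+1}` are compatible for every `t = 1,…,l-1`; and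
(c) there is a labeling of the stops `pos l,…,n` containing both labels of `σ_l`
whose only switchover is `σ_l`. -/
lemma glue_aux (n l : ℕ) (hn : 1 ≤ n) (hl : 1 ≤ l) (K : ℕ → Set Label) (side : Label → Bool)
    (hA1 : SepLabels n K side) (hA2 : TransProp n K side)
    (pos : ℕ → ℕ)
    (hp1 : ∀ t, 1 ≤ t → t ≤ l → 1 ≤ pos t)
    (hp2 : ∀ t, 1 ≤ t → t ≤ l → pos t < n)
    (hmono : ∀ t, 1 ≤ t → t < l → pos t < pos (t + 1))
    (h : ℕ → ℕ → Label)
    (hseg : ∀ t, t ≤ l → IsLabelingOn K (if t = 0 then 1 else pos t)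
      (if t = l then n else pos (t + 1) + 1) (h t))
    (hagree : ∀ t, t < l → h t (pos (t + 1)) = h (t + 1) (pos (t + 1)) ∧
        h t (pos (t + 1) + 1) = h (t + 1) (pos (t + 1) + 1))
    (hsw : ∀ t, t ≤ l → ∀ m, (if t = 0 then 1 else pos t) ≤ m →
        m < (if t = l then n else pos (t + 1) + 1) →
        (side (h t m) ≠ side (h t (m + 1)) ↔ ((1 ≤ t ∧ m = pos t) ∨ (t < l ∧ m = pos (t + 1)))))
    (idx : ℕ → ℕ)
    (idx_le : ∀ m, idx m ≤ l)
    (idx_spec : ∀ m, idx m = 0 ∨ pos (idx m) < m)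
    (idx_ge : ∀ m t, t ≤ l → (t = 0 ∨ pos t < m) → t ≤ idx m)
    (idx_mono : ∀ m m', m ≤ m' → idx m ≤ idx m') :
    ∃ f : ℕ → Label, IsLabelingOn K 1 n f := by
  have idx_ge' : ∀ m t, 1 ≤ t → t ≤ l → pos t < m → t ≤ idx m :=
    fun m t _ h2 h3 => idx_ge m t h2 (Or.inr h3)
  have posmono : ∀ t t', 1 ≤ t → t ≤ t' → t' ≤ l → pos t ≤ pos t' := by
    intro t t' h1 h2
    induction t', h2 using Nat.le_induction with
    | base => intro _; exact le_rfl
    | succ u hu ih =>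
      intro hul
      exact le_trans (ih (by omega)) (le_of_lt (hmono u (by omega) (by omega)))
  have idx_lt : ∀ m t, 1 ≤ t → t ≤ l → m ≤ pos t → idx m < t := by
    intro m t h1 h2 h3
    by_contra hcon
    push_neg at hcon
    rcases idx_spec m with hc | hc
    · omega
    · have := posmono t (idx m) h1 hcon (idx_le m)
      omega
  have coverlo : ∀ m, 1 ≤ m → (if idx m = 0 then 1 else pos (idx m)) ≤ m := by
    intro m hm
    by_cases hc : idx m = 0
    · rw [if_pos hc]; exact hm
    · rw [if_neg hc]
      rcases idx_spec m with h0 | h0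
      · omega
      · omega
  have coverhi : ∀ m, m ≤ n → m ≤ (if idx m = l then n else pos (idx m + 1) + 1) := by
    intro m hm
    by_cases hc : idx m = l
    · rw [if_pos hc]; exact hm
    · rw [if_neg hc]
      have hIl := idx_le m
      by_contra hcon
      push_neg at hcon
      have := idx_ge' m (idx m + 1) (by omega) (by omega) (by omega)
      omega
  -- agreement of the glued labeling with each segment labeling on its range
  have agree : ∀ t, t ≤ l → ∀ m, (if t = 0 then 1 else pos t) ≤ m →
      m ≤ (if t = l then n else pos (t + 1) + 1) → h (idx m) m = h t m := by
    intro t ht m hlo hhi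
    rcases lt_trichotomy (idx m) t with hc | hc | hc
    · have ht1 : 1 ≤ t := by omega
      rw [if_neg (by omega : ¬ t = 0)] at hlo
      have hmeq : m = pos t := by
        by_contra hne
        have := idx_ge' m t ht1 ht (by omega)
        omega
      have hidx : idx m = t - 1 := by
        by_cases h2 : t = 1
        · omega
        · have h3 : 1 ≤ t - 1 := by omega
          have h4 : pos (t - 1) < pos t := by
            have h5 := hmono (t - 1) h3 (by omega)
            have e : t - 1 + 1 = t := by omega
            rw [e] at h5; exact h5
          have := idx_ge' m (t - 1) h3 (by omega) (by omega)
          omega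
      have hag := (hagree (t - 1) (by omega)).1
      have e : t - 1 + 1 = t := by omega
      rw [e] at hag
      rw [hidx, hmeq, hag]
    · rw [hc]
    · have htl : t < l := lt_of_lt_of_le hc (idx_le m)
      rw [if_neg (by omega : ¬ t = l)] at hhi
      have hmeq : m = pos (t + 1) + 1 := by
        by_contra hne
        have := idx_lt m (t + 1) (by omega) (by omega) (by omega)
        omega
      have hidx : idx m = t + 1 := by
        by_cases h2 : t + 1 = l
        · have := idx_le m; omega
        · have h4 : pos (t + 1) < pos (t + 1 + 1) := hmono (t + 1) (by omega) (by omega)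
          have := idx_lt m (t + 1 + 1) (by omega) (by omega) (by omega)
          omega
      have hag := (hagree t htl).2
      rw [hidx, hmeq, ← hag]
  have fmem : ∀ m, 1 ≤ m → m ≤ n → h (idx m) m ∈ K m := by
    intro m hm hm'
    exact (hseg (idx m) (idx_le m)).1 m (coverlo m hm) (coverhi m hm')
  -- switchover step characterization
  have step : ∀ m, 1 ≤ m → m < n →
      (side (h (idx m) m) ≠ side (h (idx (m + 1)) (m + 1)) ↔ idx (m + 1) = idx m + 1) := by
    intro m hm hmn
    have hIl := idx_le m
    have hmhi : m < (if idx m = l then n else pos (idx m + 1) + 1) := by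
      by_cases hc : idx m = l
      · rw [if_pos hc]; exact hmn
      · rw [if_neg hc]
        by_contra hcon
        push_neg at hcon
        have := idx_ge' m (idx m + 1) (by omega) (by omega) (by omega)
        omega
    have e2 : h (idx (m + 1)) (m + 1) = h (idx m) (m + 1) :=
      agree (idx m) hIl (m + 1) (le_trans (coverlo m hm) (by omega)) hmhi
    rw [e2, hsw (idx m) hIl m (coverlo m hm) hmhi]
    constructor
    · rintro (⟨ht1, hpt⟩ | ⟨htl, hpt⟩)
      · rcases idx_spec m with hc | hc <;> omega
      · have g1 := idx_ge' (m + 1) (idx m + 1) (by omega) (by omega) (by omega)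
        by_cases h2 : idx m + 1 = l
        · have := idx_le (m + 1); omega
        · have hmm : pos (idx m + 1) < pos (idx m + 1 + 1) := hmono _ (by omega) (by omega)
          have := idx_lt (m + 1) (idx m + 1 + 1) (by omega) (by omega) (by omega)
          omega
    · intro he
      have h6 : pos (idx (m + 1)) < m + 1 := by
        rcases idx_spec (m + 1) with hc | hc
        · omega
        · exact hc
      rw [he] at h6
      have h8 := idx_le (m + 1)
      have h7 : ¬ pos (idx m + 1) < m := by
        intro hc
        have := idx_ge' m (idx m + 1) (by omega) (by omega) hc
        omega
      exact Or.inr ⟨by omega, by omega⟩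
  -- side is constant on stretches with the same index
  have sameSide : ∀ m m', 1 ≤ m → m ≤ m' → m' ≤ n → idx m = idx m' →
      side (h (idx m) m) = side (h (idx m') m') := by
    intro m m' h1 h3
    induction m', h3 using Nat.le_induction with
    | base => intro _ _; rfl
    | succ u hu ih =>
      intro hun hEq
      have a1 := idx_mono m u hu
      have a2 := idx_mono u (u + 1) (by omega)
      have hidxu : idx u = idx m := by omega
      have hs := ih (by omega) hidxu.symm
      have hstep := step u (by omega) (by omega)
      have heq2 : side (h (idx u) u) = side (h (idx (u + 1)) (u + 1)) := by
        by_contra hne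
        have := hstep.mp hne
        omega
      exact hs.trans heq2
  have boolne : ∀ x y z : Bool, x ≠ y → y ≠ z → x = z := by decide
  -- main disjointness for same-side stops
  have main : ∀ d m m', 1 ≤ m → m < m' → m' ≤ n → idx m' = idx m + d →
      side (h (idx m) m) = side (h (idx m') m') →
      Disjoint (h (idx m) m) (h (idx m') m') := by
    intro d
    induction d using Nat.strong_induction_on with
    | _ d IH =>
    intro m m' h1 h2 h3 hd hside
    rcases Nat.lt_or_ge d 2 with hd2 | hd2
    · rcases Nat.lt_or_ge d 1 with hd1 | hd1
      · -- d = 0 : same segment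
        have hd0 : idx m' = idx m := by omega
        have hm'hi := coverhi m' h3
        rw [hd0] at hm'hi
        have hm'lo : (if idx m = 0 then 1 else pos (idx m)) ≤ m' :=
          le_trans (coverlo m h1) (le_of_lt h2)
        have hmhi : m ≤ (if idx m = l then n else pos (idx m + 1) + 1) :=
          le_trans (le_of_lt h2) hm'hi
        have hdisj := (hseg (idx m) (idx_le m)).2 m m' (coverlo m h1) hmhi hm'lo hm'hi (by omega)
        rw [hd0]
        exact hdisj
      · -- d = 1 : contradiction with equal sides
        have hd1' : idx m' = idx m + 1 := by omega
        have htl : idx m + 1 ≤ l := by have := idx_le m'; omega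
        have ha1 : 1 ≤ pos (idx m + 1) := hp1 _ (by omega) htl
        have ham : m ≤ pos (idx m + 1) := by
          by_contra hc
          push_neg at hc
          have := idx_ge' m (idx m + 1) (by omega) htl hc
          omega
        have ham' : pos (idx m + 1) < m' := by
          rcases idx_spec m' with hc | hc
          · omega
          · rw [hd1'] at hc; exact hc
        have hidxa : idx (pos (idx m + 1)) = idx m := by
          have u1 := idx_mono m _ ham
          have u2 := idx_lt (pos (idx m + 1)) (idx m + 1) (by omega) htl le_rfl
          omega
        have hidxa1 : idx (pos (idx m + 1) + 1) = idx m + 1 := by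
          have u1 := idx_ge' (pos (idx m + 1) + 1) (idx m + 1) (by omega) htl (by omega)
          have u2 := idx_mono (pos (idx m + 1) + 1) m' (by omega)
          omega
        have s1 := sameSide m (pos (idx m + 1)) h1 ham (by omega) (by rw [hidxa])
        have s2 := sameSide (pos (idx m + 1) + 1) m' (by omega) (by omega) h3 (by omega)
        have hstep := (step (pos (idx m + 1)) ha1 (by omega)).mpr (by omega)
        exact absurd (show side (h (idx (pos (idx m + 1))) (pos (idx m + 1))) =
            side (h (idx (pos (idx m + 1) + 1)) (pos (idx m + 1) + 1)) by
          rw [← s1, hside, ← s2]) hstep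
    · -- d ≥ 2
      have htl2 : idx m + 1 + 1 ≤ l := by have := idx_le m'; omega
      have hmono1 : pos (idx m + 1) < pos (idx m + 1 + 1) := hmono (idx m + 1) (by omega) (by omega)
      have ha1 : 1 ≤ pos (idx m + 1) := hp1 _ (by omega) (by omega)
      have ham : m ≤ pos (idx m + 1) := by
        by_contra hc
        push_neg at hc
        have := idx_ge' m (idx m + 1) (by omega) (by omega) hc
        omega
      have hcm' : pos (idx m + 1 + 1) < m' := by
        rcases idx_spec m' with hc | hc
        · omega
        · have := posmono (idx m + 1 + 1) (idx m') (by omega) (by omega) (idx_le m')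
          omega
      have hidxa : idx (pos (idx m + 1)) = idx m := by
        have u1 := idx_mono m _ ham
        have u2 := idx_lt (pos (idx m + 1)) (idx m + 1) (by omega) (by omega) le_rfl
        omega
      have hidxa1 : idx (pos (idx m + 1) + 1) = idx m + 1 := by
        have u1 := idx_ge' (pos (idx m + 1) + 1) (idx m + 1) (by omega) (by omega) (by omega)
        have u2 := idx_lt (pos (idx m + 1) + 1) (idx m + 1 + 1) (by omega) (by omega) (by omega)
        omega
      have hidxc : idx (pos (idx m + 1 + 1)) = idx m + 1 := by
        have u1 := idx_ge' (pos (idx m + 1 + 1)) (idx m + 1) (by omega) (by omega) hmono1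
        have u2 := idx_lt (pos (idx m + 1 + 1)) (idx m + 1 + 1) (by omega) (by omega) le_rfl
        omega
      have hidxb : idx (pos (idx m + 1 + 1) + 1) = idx m + 1 + 1 := by
        have u1 := idx_ge' (pos (idx m + 1 + 1) + 1) (idx m + 1 + 1) (by omega) (by omega) (by omega)
        by_cases h2 : idx m + 1 + 1 = l
        · have := idx_le (pos (idx m + 1 + 1) + 1); omega
        · have h4 : pos (idx m + 1 + 1) < pos (idx m + 1 + 1 + 1) :=
            hmono (idx m + 1 + 1) (by omega) (by omega)
          have := idx_lt (pos (idx m + 1 + 1) + 1) (idx m + 1 + 1 + 1) (by omega) (by omega)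
            (by omega)
          omega
      have s1 := sameSide m (pos (idx m + 1)) h1 ham (by omega) (by rw [hidxa])
      have sstep1 := (step (pos (idx m + 1)) ha1 (by omega)).mpr (by omega)
      have s2 := sameSide (pos (idx m + 1) + 1) (pos (idx m + 1 + 1)) (by omega) (by omega)
        (by omega) (by omega)
      have sstep2 := (step (pos (idx m + 1 + 1)) (by omega) (by omega)).mpr (by omega)
      have sb : side (h (idx (pos (idx m + 1 + 1) + 1)) (pos (idx m + 1 + 1) + 1)) =
          side (h (idx m) m) := by
        have e1 : side (h (idx m) m) ≠
            side (h (idx (pos (idx m + 1) + 1)) (pos (idx m + 1) + 1)) := by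
          rw [s1]; exact sstep1
        have e2 : side (h (idx (pos (idx m + 1) + 1)) (pos (idx m + 1) + 1)) ≠
            side (h (idx (pos (idx m + 1 + 1) + 1)) (pos (idx m + 1 + 1) + 1)) := by
          rw [s2]; exact sstep2
        exact (boolne _ _ _ e1 e2).symm
      -- Disjoint between the two bridge stops (segment idx m + 1)
      have dab : Disjoint (h (idx (pos (idx m + 1))) (pos (idx m + 1)))
          (h (idx (pos (idx m + 1 + 1) + 1)) (pos (idx m + 1 + 1) + 1)) := by
        have e1 : h (idx (pos (idx m + 1))) (pos (idx m + 1)) = h (idx m + 1) (pos (idx m + 1)) :=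
          agree (idx m + 1) (by omega) _
            (by rw [if_neg (by omega : ¬ idx m + 1 = 0)])
            (by rw [if_neg (by omega : ¬ idx m + 1 = l)]; omega)
        have e2 : h (idx (pos (idx m + 1 + 1) + 1)) (pos (idx m + 1 + 1) + 1) =
            h (idx m + 1) (pos (idx m + 1 + 1) + 1) :=
          agree (idx m + 1) (by omega) _
            (by rw [if_neg (by omega : ¬ idx m + 1 = 0)]; omega)
            (by rw [if_neg (by omega : ¬ idx m + 1 = l)])
        rw [e1, e2]
        exact (hseg (idx m + 1) (by omega)).2 _ _
          (by rw [if_neg (by omega : ¬ idx m + 1 = 0)])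
          (by rw [if_neg (by omega : ¬ idx m + 1 = l)]; omega)
          (by rw [if_neg (by omega : ¬ idx m + 1 = 0)]; omega)
          (by rw [if_neg (by omega : ¬ idx m + 1 = l)])
          (by omega)
      have dmb : Disjoint (h (idx m) m)
          (h (idx (pos (idx m + 1 + 1) + 1)) (pos (idx m + 1 + 1) + 1)) := by
        rcases eq_or_lt_of_le ham with he | hlt
        · rw [← he] at dab; exact dab
        · have dma : Disjoint (h (idx m) m) (h (idx (pos (idx m + 1))) (pos (idx m + 1))) := by
            have e1 : h (idx (pos (idx m + 1))) (pos (idx m + 1)) =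
                h (idx m) (pos (idx m + 1)) := by rw [hidxa]
            rw [e1]
            exact (hseg (idx m) (idx_le m)).2 m (pos (idx m + 1)) (coverlo m h1)
              (by rw [if_neg (by omega : ¬ idx m = l)]; omega)
              (le_trans (coverlo m h1) ham)
              (by rw [if_neg (by omega : ¬ idx m = l)]; omega)
              (by omega)
          exact hA2 m (pos (idx m + 1)) (pos (idx m + 1 + 1) + 1) h1 hlt (by omega) (by omega)
            _ (fmem m h1 (by omega)) _ (fmem (pos (idx m + 1)) (by omega) (by omega))
            _ (fmem (pos (idx m + 1 + 1) + 1) (by omega) (by omega))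
            s1 (s1.symm.trans sb.symm) dma dab
      rcases eq_or_lt_of_le (show pos (idx m + 1 + 1) + 1 ≤ m' by omega) with he | hlt
      · rw [← he]; exact dmb
      · have dbm' : Disjoint (h (idx (pos (idx m + 1 + 1) + 1)) (pos (idx m + 1 + 1) + 1))
            (h (idx m') m') :=
          IH (d - 2) (by omega) (pos (idx m + 1 + 1) + 1) m' (by omega) hlt h3
            (by omega) (sb.trans hside)
        exact hA2 m (pos (idx m + 1 + 1) + 1) m' h1 (by omega) hlt h3
          _ (fmem m h1 (by omega)) _ (fmem (pos (idx m + 1 + 1) + 1) (by omega) (by omega))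
          _ (fmem m' (by omega) h3)
          sb.symm (sb.trans hside) dmb dbm'
  refine ⟨fun m => h (idx m) m, fun m hm hm' => fmem m hm hm', ?_⟩
  intro m m' h1 h2 h3 h4 h5
  have key : ∀ a b, 1 ≤ a → b ≤ n → a < b → Disjoint (h (idx a) a) (h (idx b) b) := by
    intro a b ha hb hab
    by_cases hs : side (h (idx a) a) = side (h (idx b) b)
    · have hdle := idx_mono a b (le_of_lt hab)
      exact main (idx b - idx a) a b ha hab hb (by omega) hs
    · exact hA1 a b ha (by omega) (by omega) hb _ (fmem a ha (by omega)) _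
        (fmem b (by omega) hb) hs
  rcases lt_or_gt_of_ne h5 with hc | hc
  · exact key m m' h1 h4 hc
  · exact (key m' m h3 h2 hc).symm
def idxOf (l : ℕ) (pos : ℕ → ℕ) (m : ℕ) : ℕ :=
  ((Finset.range (l + 1)).filter (fun t => t = 0 ∨ pos t < m)).max'
    ⟨0, Finset.mem_filter.mpr ⟨Finset.mem_range.mpr (Nat.succ_pos l), Or.inl rfl⟩⟩

lemma idxOf_mem (l : ℕ) (pos : ℕ → ℕ) (m : ℕ) :
    idxOf l pos m ∈ (Finset.range (l + 1)).filter (fun t => t = 0 ∨ pos t < m) :=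
  Finset.max'_mem _ _

lemma idxOf_le (l : ℕ) (pos : ℕ → ℕ) (m : ℕ) : idxOf l pos m ≤ l := by
  have := idxOf_mem l pos m
  rw [Finset.mem_filter, Finset.mem_range] at this
  omega

lemma idxOf_spec (l : ℕ) (pos : ℕ → ℕ) (m : ℕ) :
    idxOf l pos m = 0 ∨ pos (idxOf l pos m) < m := by
  have := idxOf_mem l pos m
  rw [Finset.mem_filter] at this
  exact this.2

lemma idxOf_ge (l : ℕ) (pos : ℕ → ℕ) (m t : ℕ) (h1 : t ≤ l) (h2 : t = 0 ∨ pos t < m) :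
    t ≤ idxOf l pos m :=
  Finset.le_max' _ t (Finset.mem_filter.mpr ⟨Finset.mem_range.mpr (by omega), h2⟩)

lemma idxOf_mono (l : ℕ) (pos : ℕ → ℕ) {m m' : ℕ} (h : m ≤ m') :
    idxOf l pos m ≤ idxOf l pos m' := by
  apply Finset.le_max'
  have hm := idxOf_mem l pos m
  rw [Finset.mem_filter] at hm ⊢
  exact ⟨hm.1, hm.2.imp id (fun h' => lt_of_lt_of_le h' h)⟩
theorem stmt6
    (n : ℕ) (hn : 1 ≤ n) (K : ℕ → Set Label) (side : Label → Bool)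
    (hA1 : SepLabels n K side) (hA2 : TransProp n K side) :
    (∃ f : ℕ → Label, IsLabelingOn K 1 n f) ↔
      ((∃ f : ℕ → Label, IsLabelingOn K 1 n f ∧
          ∀ m, 1 ≤ m → m < n → side (f m) = side (f (m + 1))) ∨
       (∃ l : ℕ, 1 ≤ l ∧ ∃ pos : ℕ → ℕ, ∃ L1 L2 : ℕ → Label,
          (∀ t, 1 ≤ t → t ≤ l → 1 ≤ pos t ∧ pos t < n ∧
            L1 t ∈ K (pos t) ∧ L2 t ∈ K (pos t + 1) ∧ side (L1 t) ≠ side (L2 t)) ∧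
          (∀ t, 1 ≤ t → t < l → pos t < pos (t + 1)) ∧
          -- (a)
          (∃ g : ℕ → Label, IsLabelingOn K 1 (pos 1 + 1) g ∧
            g (pos 1) = L1 1 ∧ g (pos 1 + 1) = L2 1 ∧
            ∀ m, 1 ≤ m → m < pos 1 + 1 →
              (side (g m) ≠ side (g (m + 1)) ↔ m = pos 1)) ∧
          -- (b)
          (∀ t, 1 ≤ t → t < l →
            Compatible K side (pos t) (L1 t) (L2 t)
              (pos (t + 1)) (L1 (t + 1)) (L2 (t + 1))) ∧
          -- (c)
          (∃ g : ℕ → Label, IsLabelingOn K (pos l) n g ∧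
            g (pos l) = L1 l ∧ g (pos l + 1) = L2 l ∧
            ∀ m, pos l ≤ m → m < n →
              (side (g m) ≠ side (g (m + 1)) ↔ m = pos l)))) := by
  constructor
  · rintro ⟨f, hf⟩
    classical
    by_cases hemp : ∀ m, 1 ≤ m → m < n → side (f m) = side (f (m + 1))
    · exact Or.inl ⟨f, hf, hemp⟩
    · right
      push_neg at hemp
      obtain ⟨S, hSdef⟩ : ∃ S : Finset ℕ,
          S = (Finset.Ico 1 n).filter (fun m => side (f m) ≠ side (f (m + 1))) := ⟨_, rfl⟩
      have memS : ∀ m, m ∈ S ↔ (1 ≤ m ∧ m < n ∧ side (f m) ≠ side (f (m + 1))) := by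
        intro m
        rw [hSdef, Finset.mem_filter, Finset.mem_Ico]
        tauto
      have hSne : S.Nonempty := by
        obtain ⟨m, h1, h2, h3⟩ := hemp
        exact ⟨m, (memS m).mpr ⟨h1, h2, h3⟩⟩
      obtain ⟨L, hLeq⟩ : ∃ L : List ℕ, L = S.sort (· ≤ ·) := ⟨_, rfl⟩
      have hLlen : L.length = S.card := by rw [hLeq]; exact Finset.length_sort _
      have hcard : 1 ≤ S.card := Finset.card_pos.mpr hSne
      have hLsorted : List.Pairwise (· < ·) L := by rw [hLeq]; exact (Finset.sortedLT_sort S).pairwise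
      have getDeq : ∀ i (hi : i < L.length), L.getD i 0 = L.get ⟨i, hi⟩ := by
        intro i hi
        simp [List.getD_eq_getElem?_getD, List.getElem?_eq_getElem hi, List.get_eq_getElem]
      have hLS : ∀ x, x ∈ L → x ∈ S := by
        intro x hx
        rw [hLeq] at hx
        exact (Finset.mem_sort _).mp hx
      have getDmem : ∀ t, 1 ≤ t → t ≤ S.card → L.getD (t - 1) 0 ∈ S := by
        intro t h1 h2
        have hlt : t - 1 < L.length := by omega
        rw [getDeq _ hlt]
        exact hLS _ (List.get_mem L ⟨t - 1, hlt⟩)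
      have getDmono : ∀ t t', 1 ≤ t → t < t' → t' ≤ S.card →
          L.getD (t - 1) 0 < L.getD (t' - 1) 0 := by
        intro t t' h1 h2 h3
        have e1 : t - 1 < L.length := by omega
        have e2 : t' - 1 < L.length := by omega
        rw [getDeq _ e1, getDeq _ e2]
        exact List.SortedLT.strictMono_get hLsorted.sortedLT (by simp only [Fin.mk_lt_mk]; omega)
      have getDmono' : ∀ t t', 1 ≤ t → t ≤ t' → t' ≤ S.card →
          L.getD (t - 1) 0 ≤ L.getD (t' - 1) 0 := by
        intro t t' h1 h2 h3
        rcases eq_or_lt_of_le h2 with he | hl2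
        · rw [he]
        · exact le_of_lt (getDmono t t' h1 hl2 h3)
      have getDsurj : ∀ m, m ∈ S → ∃ t, 1 ≤ t ∧ t ≤ S.card ∧ L.getD (t - 1) 0 = m := by
        intro m hm
        have hmL : m ∈ L := by rw [hLeq]; exact (Finset.mem_sort _).mpr hm
        obtain ⟨⟨i, hi⟩, hg⟩ := List.get_of_mem hmL
        refine ⟨i + 1, by omega, by omega, ?_⟩
        rw [show i + 1 - 1 = i from rfl, getDeq i hi]
        exact hg
      have hres : ∀ a b, 1 ≤ a → b ≤ n → IsLabelingOn K a b f :=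
        fun a b ha hb => ⟨fun m h1 h2 => hf.1 m (by omega) (by omega),
          fun m m' u1 u2 u3 u4 u5 => hf.2 m m' (by omega) (by omega) (by omega) (by omega) u5⟩
      have sidec : ∀ a b, 1 ≤ a → a ≤ b → b ≤ n → (∀ m, a ≤ m → m < b → m ∉ S) →
          side (f a) = side (f b) := by
        intro a b h1 h2
        induction b, h2 using Nat.le_induction with
        | base => intro _ _; rfl
        | succ u hu ih =>
          intro hun hnot
          have e1 : side (f a) = side (f u) := ih (by omega) (fun m hm1 hm2 => hnot m hm1 (by omega))
          have hu' : u ∉ S := hnot u hu (by omega)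
          have e2 : side (f u) = side (f (u + 1)) := by
            by_contra hne
            exact hu' ((memS u).mpr ⟨by omega, by omega, hne⟩)
          exact e1.trans e2
      refine ⟨S.card, hcard, fun t => L.getD (t - 1) 0, fun t => f (L.getD (t - 1) 0),
        fun t => f (L.getD (t - 1) 0 + 1), ?_, ?_, ?_, ?_, ?_⟩
      · beta_reduce
        intro t h1 h2
        have hm := (memS _).mp (getDmem t h1 h2)
        exact ⟨hm.1, hm.2.1, hf.1 _ hm.1 (by omega), hf.1 _ (by omega) (by omega), hm.2.2⟩
      · beta_reduce
        intro t h1 h2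
        exact getDmono t (t + 1) h1 (by omega) (by omega)
      · -- (a)
        beta_reduce
        have hm1 := (memS _).mp (getDmem 1 le_rfl hcard)
        refine ⟨f, hres 1 (L.getD (1 - 1) 0 + 1) le_rfl (by omega), rfl, rfl, ?_⟩
        intro m h1 h2
        constructor
        · intro hne
          have hmS : m ∈ S := (memS m).mpr ⟨h1, by omega, hne⟩
          obtain ⟨t', u1, u2, u3⟩ := getDsurj m hmS
          have := getDmono' 1 t' le_rfl u1 u2
          omega
        · intro he
          rw [he]
          exact hm1.2.2
      · -- (b)
        beta_reduce
        intro t h1 h2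
        have hmt := (memS _).mp (getDmem t h1 (by omega))
        have hmt1 := (memS _).mp (getDmem (t + 1) (by omega) (by omega))
        have hlt := getDmono t (t + 1) h1 (by omega) (by omega)
        refine ⟨?_, f, hres (L.getD (t - 1) 0) (L.getD (t + 1 - 1) 0 + 1) (by omega) (by omega),
          rfl, rfl, rfl, rfl, ?_⟩
        · -- side (f (pos t + 1)) = side (f (pos (t+1)))
          apply sidec (L.getD (t - 1) 0 + 1) (L.getD (t + 1 - 1) 0) (by omega) (by omega) (by omega)
          intro m hm1 hm2 hmS
          obtain ⟨t', u1, u2, u3⟩ := getDsurj m hmS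
          rcases le_or_gt t' t with hc | hc
          · have := getDmono' t' t u1 hc (by omega)
            omega
          · have := getDmono' (t + 1) t' (by omega) hc u2
            omega
        · intro m hm1 hm2
          constructor
          · intro hne
            have hmS : m ∈ S := (memS m).mpr ⟨by omega, by omega, hne⟩
            obtain ⟨t', u1, u2, u3⟩ := getDsurj m hmS
            rcases le_or_gt t' t with hc | hc
            · have := getDmono' t' t u1 hc (by omega)
              exact Or.inl (by omega)
            · have := getDmono' (t + 1) t' (by omega) hc u2
              exact Or.inr (by omega)
          · rintro (he | he) <;> rw [he]
            · exact hmt.2.2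
            · exact hmt1.2.2
      · -- (c)
        beta_reduce
        have hml := (memS _).mp (getDmem S.card hcard le_rfl)
        refine ⟨f, hres (L.getD (S.card - 1) 0) n (by omega) le_rfl, rfl, rfl, ?_⟩
        intro m h1 h2
        constructor
        · intro hne
          have hmS : m ∈ S := (memS m).mpr ⟨by omega, h2, hne⟩
          obtain ⟨t', u1, u2, u3⟩ := getDsurj m hmS
          have := getDmono' t' S.card u1 u2 le_rfl
          omega
        · intro he
          rw [he]
          exact hml.2.2
  · rintro (⟨f, hf, -⟩ | ⟨l, hl, pos, L1, L2, hbul, hmono', ⟨ga, hga1, hga2, hga3, hga4⟩,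
      hcomp, ⟨gc, hgc1, hgc2, hgc3, hgc4⟩⟩)
    · exact ⟨f, hf⟩
    · classical
      have hp1 : ∀ t, 1 ≤ t → t ≤ l → 1 ≤ pos t := fun t a b => (hbul t a b).1
      have hp2 : ∀ t, 1 ≤ t → t ≤ l → pos t < n := fun t a b => (hbul t a b).2.1
      have hex : ∀ t, t ≤ l → ∃ g : ℕ → Label,
          IsLabelingOn K (if t = 0 then 1 else pos t) (if t = l then n else pos (t + 1) + 1) g ∧
          (1 ≤ t → g (pos t) = L1 t ∧ g (pos t + 1) = L2 t) ∧
          (t < l → g (pos (t + 1)) = L1 (t + 1) ∧ g (pos (t + 1) + 1) = L2 (t + 1)) ∧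
          (∀ m, (if t = 0 then 1 else pos t) ≤ m → m < (if t = l then n else pos (t + 1) + 1) →
            (side (g m) ≠ side (g (m + 1)) ↔
              ((1 ≤ t ∧ m = pos t) ∨ (t < l ∧ m = pos (t + 1))))) := by
        intro t ht
        by_cases h0 : t = 0
        · subst h0
          rw [if_pos rfl, if_neg (by omega : ¬ (0 : ℕ) = l)]
          simp only [Nat.zero_add]
          refine ⟨ga, hga1, fun h1 => absurd h1 (by omega), fun _ => ⟨hga2, hga3⟩, ?_⟩
          intro m hm1 hm2
          rw [hga4 m hm1 hm2]
          constructor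
          · intro he; exact Or.inr ⟨by omega, he⟩
          · rintro (⟨h1, -⟩ | ⟨-, h2⟩)
            · omega
            · exact h2
        by_cases hll : t = l
        · subst hll
          rw [if_neg h0, if_pos rfl]
          refine ⟨gc, hgc1, fun _ => ⟨hgc2, hgc3⟩, fun hlt => absurd hlt (by omega), ?_⟩
          intro m hm1 hm2
          rw [hgc4 m hm1 hm2]
          constructor
          · intro he; exact Or.inl ⟨by omega, he⟩
          · rintro (⟨-, h2⟩ | ⟨hlt, -⟩)
            · exact h2
            · omega
        · have h1t : 1 ≤ t := by omega
          have htl : t < l := by omega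
          obtain ⟨hside, g, hg1, hg2, hg3, hg4, hg5, hg6⟩ := hcomp t h1t htl
          rw [if_neg h0, if_neg hll]
          refine ⟨g, hg1, fun _ => ⟨hg2, hg3⟩, fun _ => ⟨hg4, hg5⟩, ?_⟩
          intro m hm1 hm2
          rw [hg6 m hm1 hm2]
          constructor
          · rintro (he | he)
            · exact Or.inl ⟨h1t, he⟩
            · exact Or.inr ⟨htl, he⟩
          · rintro (⟨-, he⟩ | ⟨-, he⟩)
            · exact Or.inl he
            · exact Or.inr he
      choose! g hgA hgB hgC hgD using hex
      refine glue_aux n l hn hl K side hA1 hA2 pos hp1 hp2 hmono' g hgA ?_ hgD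
        (idxOf l pos) (idxOf_le l pos) (idxOf_spec l pos) (idxOf_ge l pos)
        (fun m m' hm => idxOf_mono l pos hm)
      intro t htl
      constructor
      · rw [(hgC t (by omega) htl).1, (hgB (t + 1) (by omega) (by omega)).1]
      · rw [(hgC t (by omega) htl).2, (hgB (t + 1) (by omega) (by omega)).2]
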